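/- arXiv:1210.5015 — 4 statements merged into one kernel-verified Lean document; each statement's English description precedes it below -/
import Mathlib

section
/- Let k, κ be nonzero real numbers and let L be a real Lie algebra possessing a basis (T, N1, N2) (so L is 3-dimensional) whose brackets satisfy ⁅T,N1⁆ = κ·N2 − k·T, ⁅T,N2⁆ = −κ·N1, and ⁅N1,N2⁆ = −k·N2. Then the linear map L → sl(2,ℝ) determined on the basis by T ↦ E1, N1 ↦ −E3, N2 ↦ E2, where E1, E2, E3 are formed with a = κ/2 and b = k/2, is an isomorphism of Lie algebras. In particular, L is isomorphic to sl(2,ℝ). -/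
/-- `E1 = a·[[0,1],[−1,0]]` as a 2×2 real matrix. -/
noncomputable def E1 (a : ℝ) : Matrix (Fin 2) (Fin 2) ℝ := a • !![0, 1; -1, 0]

/-- `E2 = 2b·[[0,1],[0,0]]` as a 2×2 real matrix. -/
noncomputable def E2 (b : ℝ) : Matrix (Fin 2) (Fin 2) ℝ := (2 * b) • !![0, 1; 0, 0]

/-- `E3 = b·[[1,0],[0,−1]]` as a 2×2 real matrix. -/
noncomputable def E3 (b : ℝ) : Matrix (Fin 2) (Fin 2) ℝ := b • !![1, 0; 0, -1]

open LieAlgebra.SpecialLinear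


lemma mem_sl2 (M : Matrix (Fin 2) (Fin 2) ℝ) (h : M 0 0 + M 1 1 = 0) :
    M ∈ sl (Fin 2) ℝ := by
  show Matrix.trace M = 0
  simpa [Matrix.trace_fin_two] using h

lemma sl2_trace (A : sl (Fin 2) ℝ) :
    (A : Matrix (Fin 2) (Fin 2) ℝ) 0 0 + (A : Matrix (Fin 2) (Fin 2) ℝ) 1 1 = 0 := by
  have h : Matrix.trace (A : Matrix (Fin 2) (Fin 2) ℝ) = 0 := A.2
  simpa [Matrix.trace_fin_two] using h

lemma sl2_smul_apply (c : ℝ) (A : sl (Fin 2) ℝ) (i j : Fin 2) :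
    ((c • A : sl (Fin 2) ℝ) : Matrix (Fin 2) (Fin 2) ℝ) i j
      = c * (A : Matrix (Fin 2) (Fin 2) ℝ) i j := rfl

lemma sl2_add_apply (A B : sl (Fin 2) ℝ) (i j : Fin 2) :
    ((A + B : sl (Fin 2) ℝ) : Matrix (Fin 2) (Fin 2) ℝ) i j
      = (A : Matrix (Fin 2) (Fin 2) ℝ) i j + (B : Matrix (Fin 2) (Fin 2) ℝ) i j := rfl

lemma sl2_sub_apply (A B : sl (Fin 2) ℝ) (i j : Fin 2) :
    ((A - B : sl (Fin 2) ℝ) : Matrix (Fin 2) (Fin 2) ℝ) i j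
      = (A : Matrix (Fin 2) (Fin 2) ℝ) i j - (B : Matrix (Fin 2) (Fin 2) ℝ) i j := rfl


set_option maxHeartbeats 1600000 in
/-- Let `k, κ` be nonzero reals and `L` a real Lie algebra with a basis `(T, N1, N2)`
satisfying `⁅T,N1⁆ = κ·N2 − k·T`, `⁅T,N2⁆ = −κ·N1`, `⁅N1,N2⁆ = −k·N2`.  Then the linear
map `L → sl(2,ℝ)` determined on the basis by `T ↦ E1`, `N1 ↦ −E3`, `N2 ↦ E2` (with
`a = κ/2`, `b = k/2`) is an isomorphism of Lie algebras; in particular `L ≅ sl(2,ℝ)`. -/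
theorem stmt4 {L : Type*} [LieRing L] [LieAlgebra ℝ L]
    (k κ : ℝ) (hk : k ≠ 0) (hκ : κ ≠ 0)
    (T N1 N2 : L)
    (bL : Module.Basis (Fin 3) ℝ L) (hbL : ⇑bL = ![T, N1, N2])
    (h1 : ⁅T, N1⁆ = κ • N2 - k • T)
    (h2 : ⁅T, N2⁆ = (-κ) • N1)
    (h3 : ⁅N1, N2⁆ = (-k) • N2) :
    ∃ e : L ≃ₗ⁅ℝ⁆ (LieAlgebra.SpecialLinear.sl (Fin 2) ℝ),
      (e T : Matrix (Fin 2) (Fin 2) ℝ) = E1 (κ / 2) ∧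
      (e N1 : Matrix (Fin 2) (Fin 2) ℝ) = -(E3 (k / 2)) ∧
      (e N2 : Matrix (Fin 2) (Fin 2) ℝ) = E2 (k / 2) := by
  set v0 : sl (Fin 2) ℝ := ⟨!![0, κ/2; -(κ/2), 0], mem_sl2 _ (by norm_num)⟩ with hv0
  set v1 : sl (Fin 2) ℝ := ⟨!![-(k/2), 0; 0, k/2], mem_sl2 _ (by norm_num)⟩ with hv1
  set v2 : sl (Fin 2) ℝ := ⟨!![0, k; 0, 0], mem_sl2 _ (by norm_num)⟩ with hv2
  set f : L →ₗ[ℝ] sl (Fin 2) ℝ := bL.constr ℝ ![v0, v1, v2] with hf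
  have hb0 : bL 0 = T := by rw [hbL]; rfl
  have hb1 : bL 1 = N1 := by rw [hbL]; rfl
  have hb2 : bL 2 = N2 := by rw [hbL]; rfl
  have fT : f T = v0 := by rw [← hb0, hf, Module.Basis.constr_basis]; rfl
  have fN1 : f N1 = v1 := by rw [← hb1, hf, Module.Basis.constr_basis]; rfl
  have fN2 : f N2 = v2 := by rw [← hb2, hf, Module.Basis.constr_basis]; rfl
  -- bracket relations among the images
  have br01 : ⁅v0, v1⁆ = κ • v2 - k • v0 := by
    apply Subtype.ext
    show v0.val * v1.val - v1.val * v0.val = (((κ • v2 - k • v0 : sl (Fin 2) ℝ)) : Matrix (Fin 2) (Fin 2) ℝ)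
    ext i j
    fin_cases i <;> fin_cases j <;>
      simp [sl2_sub_apply, sl2_smul_apply, hv0, hv1, hv2, Matrix.sub_apply,
        Matrix.mul_apply, Fin.sum_univ_two] <;> ring
  have br02 : ⁅v0, v2⁆ = (-κ) • v1 := by
    apply Subtype.ext
    show v0.val * v2.val - v2.val * v0.val = (((-κ) • v1 : sl (Fin 2) ℝ) : Matrix (Fin 2) (Fin 2) ℝ)
    ext i j
    fin_cases i <;> fin_cases j <;>
      simp [sl2_smul_apply, hv0, hv1, hv2, Matrix.sub_apply,
        Matrix.mul_apply, Fin.sum_univ_two] <;> ring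
  have br12 : ⁅v1, v2⁆ = (-k) • v2 := by
    apply Subtype.ext
    show v1.val * v2.val - v2.val * v1.val = (((-k) • v2 : sl (Fin 2) ℝ) : Matrix (Fin 2) (Fin 2) ℝ)
    ext i j
    fin_cases i <;> fin_cases j <;>
      simp [sl2_smul_apply, hv0, hv1, hv2, Matrix.sub_apply,
        Matrix.mul_apply, Fin.sum_univ_two] <;> ring
  -- f is a Lie algebra morphism
  have h1' : ⁅N1, T⁆ = -(κ • N2 - k • T) := by rw [← h1, ← lie_skew]
  have h2' : ⁅N2, T⁆ = -((-κ) • N1) := by rw [← h2, ← lie_skew]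
  have h3' : ⁅N2, N1⁆ = -((-k) • N2) := by rw [← h3, ← lie_skew]
  have b10 : ⁅v1, v0⁆ = -(κ • v2 - k • v0) := by rw [← br01, ← lie_skew]
  have b20 : ⁅v2, v0⁆ = -((-κ) • v1) := by rw [← br02, ← lie_skew]
  have b21 : ⁅v2, v1⁆ = -((-k) • v2) := by rw [← br12, ← lie_skew]
  have key : ∀ x y : L, f ⁅x, y⁆ = ⁅f x, f y⁆ := by
    intro x y
    have hx := bL.sum_repr x
    have hy := bL.sum_repr y
    rw [Fin.sum_univ_three, hb0, hb1, hb2] at hx hy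
    rw [← hx, ← hy]
    simp only [add_lie, lie_add, smul_lie, lie_smul, map_add, map_smul, map_sub, map_neg,
      lie_self, smul_zero, map_zero, h1, h2, h3, h1', h2', h3', fT, fN1, fN2,
      br01, br02, br12, b10, b20, b21]
    all_goals module
  -- inverse linear map
  set g : sl (Fin 2) ℝ →ₗ[ℝ] L :=
    { toFun := fun A => (-2 * ((A : Matrix (Fin 2) (Fin 2) ℝ) 1 0) / κ) • T
        + (-2 * ((A : Matrix (Fin 2) (Fin 2) ℝ) 0 0) / k) • N1
        + ((((A : Matrix (Fin 2) (Fin 2) ℝ) 0 1) + ((A : Matrix (Fin 2) (Fin 2) ℝ) 1 0)) / k) • N2,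
      map_add' := by
        intro A B
        simp only [sl2_add_apply]
        match_scalars <;> ring
      map_smul' := by
        intro c A
        simp only [sl2_smul_apply, RingHom.id_apply]
        match_scalars <;> ring } with hg
  have gval : ∀ A : sl (Fin 2) ℝ, g A = (-2 * ((A : Matrix (Fin 2) (Fin 2) ℝ) 1 0) / κ) • T
        + (-2 * ((A : Matrix (Fin 2) (Fin 2) ℝ) 0 0) / k) • N1
        + ((((A : Matrix (Fin 2) (Fin 2) ℝ) 0 1) + ((A : Matrix (Fin 2) (Fin 2) ℝ) 1 0)) / k) • N2 :=
    fun A => rfl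
  have gv0 : g v0 = T := by
    rw [gval, hv0]
    show (-2 * (-(κ/2)) / κ) • T + (-2 * 0 / k) • N1 + ((κ/2 + -(κ/2)) / k) • N2 = T
    rw [show -2 * (-(κ/2)) / κ = 1 by field_simp]
    norm_num
  have gv1 : g v1 = N1 := by
    rw [gval, hv1]
    show (-2 * 0 / κ) • T + (-2 * (-(k/2)) / k) • N1 + ((0 + 0) / k) • N2 = N1
    rw [show -2 * (-(k/2)) / k = 1 by field_simp]
    norm_num
  have gv2 : g v2 = N2 := by
    rw [gval, hv2]
    show (-2 * 0 / κ) • T + (-2 * 0 / k) • N1 + ((k + 0) / k) • N2 = N2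
    rw [show (k + 0) / k = 1 by rw [add_zero, div_self hk]]
    norm_num
  have left_inv : ∀ x : L, g (f x) = x := by
    have hcomp : g ∘ₗ f = LinearMap.id := by
      apply bL.ext
      intro i
      fin_cases i
      · show g (f (bL 0)) = bL 0
        rw [hb0, fT, gv0]
      · show g (f (bL 1)) = bL 1
        rw [hb1, fN1, gv1]
      · show g (f (bL 2)) = bL 2
        rw [hb2, fN2, gv2]
    intro x
    exact DFunLike.congr_fun hcomp x
  have right_inv : ∀ A : sl (Fin 2) ℝ, f (g A) = A := by
    intro A
    have ht := sl2_trace A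
    have hA : A = (-2 * ((A : Matrix (Fin 2) (Fin 2) ℝ) 1 0) / κ) • v0
        + (-2 * ((A : Matrix (Fin 2) (Fin 2) ℝ) 0 0) / k) • v1
        + ((((A : Matrix (Fin 2) (Fin 2) ℝ) 0 1) + ((A : Matrix (Fin 2) (Fin 2) ℝ) 1 0)) / k) • v2 := by
      apply Subtype.ext
      ext i j
      have h11 : (A : Matrix (Fin 2) (Fin 2) ℝ) 1 1 = -((A : Matrix (Fin 2) (Fin 2) ℝ) 0 0) := by
        linarith [ht]
      fin_cases i <;> fin_cases j <;>
        · simp [sl2_add_apply, sl2_smul_apply, hv0, hv1, hv2, h11]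
          field_simp
          try ring
    rw [gval, map_add, map_add, map_smul, map_smul, map_smul, fT, fN1, fN2]
    exact hA.symm
  let F : L →ₗ⁅ℝ⁆ sl (Fin 2) ℝ := { f with map_lie' := fun {x y} => key x y }
  let e : L ≃ₗ⁅ℝ⁆ sl (Fin 2) ℝ :=
    { F with invFun := fun A => g A, left_inv := left_inv, right_inv := right_inv }
  have heval : ∀ x : L, e x = f x := fun x => rfl
  refine ⟨e, ?_, ?_, ?_⟩
  · rw [heval, fT, hv0]
    ext i j; fin_cases i <;> fin_cases j <;> simp [E1]
  · rw [heval, fN1, hv1]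
    ext i j; fin_cases i <;> fin_cases j <;> simp [E3]
  · rw [heval, fN2, hv2]
    ext i j; fin_cases i <;> fin_cases j <;> simp [E2] <;> ring
end

section
/- Let α, β, κ ∈ ℝ with κ ≠ 0, let g(t) = sinh(α)·cos(κt+β) + cosh(α) (which is strictly positive), and define φ : ℝ → ℝ by φ(t) = −log(g(t)). Then for all t ∈ ℝ: e^{−φ(t)}·(φ′(t))² + κ²·(e^{φ(t)} + e^{−φ(t)}) = 2κ²·cosh(α). In particular, the left-hand side is constant in t. -/
/-- Let `α, β, κ ∈ ℝ` with `κ ≠ 0`, let `g t = sinh(α)·cos(κt+β) + cosh(α)` (which is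
strictly positive) and `φ t = −log (g t)`.  Then for all `t`,
`e^{−φ t}·(φ' t)² + κ²·(e^{φ t} + e^{−φ t}) = 2κ²·cosh(α)`; in particular the left-hand
side is constant in `t`. -/
theorem stmt9 (α β κ : ℝ) (hκ : κ ≠ 0)
    (g : ℝ → ℝ) (hg : ∀ t, g t = Real.sinh α * Real.cos (κ * t + β) + Real.cosh α)
    (φ : ℝ → ℝ) (hφ : ∀ t, φ t = -Real.log (g t)) :
    ∀ t : ℝ,
      0 < g t ∧
      Real.exp (-φ t) * (deriv φ t) ^ 2 + κ ^ 2 * (Real.exp (φ t) + Real.exp (-φ t)) =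
        2 * κ ^ 2 * Real.cosh α := by
  have hgfun : g = fun t => Real.sinh α * Real.cos (κ * t + β) + Real.cosh α :=
    funext hg
  have hgpos : ∀ t, 0 < g t := by
    intro t
    rw [hg]
    have h1 : |Real.sinh α * Real.cos (κ * t + β)| ≤ |Real.sinh α| := by
      rw [abs_mul]
      calc |Real.sinh α| * |Real.cos (κ * t + β)| ≤ |Real.sinh α| * 1 :=
        mul_le_mul_of_nonneg_left (Real.abs_cos_le_one _) (abs_nonneg _)
      _ = |Real.sinh α| := mul_one _
    have h2 : |Real.sinh α| < Real.cosh α := by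
      rcases abs_cases (Real.sinh α) with ⟨h, _⟩ | ⟨h, _⟩ <;> rw [h] <;>
        nlinarith [Real.cosh_sq α, Real.cosh_pos α, Real.sinh_sq α, Real.exp_pos α,
          Real.exp_pos (-α), Real.sinh_eq α, Real.cosh_eq α]
    nlinarith [abs_le.mp h1]
  intro t
  refine ⟨hgpos t, ?_⟩
  have hgd : HasDerivAt g (-(Real.sinh α * (Real.sin (κ * t + β) * κ))) t := by
    rw [hgfun]
    have h1 : HasDerivAt (fun t : ℝ => κ * t + β) κ t := by
      simpa using ((hasDerivAt_id t).const_mul κ).add_const β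
    simpa using ((h1.cos.const_mul (Real.sinh α)).add_const (Real.cosh α))
  have hφfun : φ = fun t => -Real.log (g t) := funext hφ
  have hφd : HasDerivAt φ ((g t)⁻¹ * (Real.sinh α * (Real.sin (κ * t + β) * κ))) t := by
    rw [hφfun]
    have := (Real.hasDerivAt_log (hgpos t).ne').comp t hgd
    have h2 := this.neg
    simp only [mul_neg, neg_neg] at h2
    exact h2
  have hderiv : deriv φ t = (g t)⁻¹ * (Real.sinh α * (Real.sin (κ * t + β) * κ)) :=
    hφd.deriv
  have hexp1 : Real.exp (-φ t) = g t := by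
    rw [hφ, neg_neg, Real.exp_log (hgpos t)]
  have hexp2 : Real.exp (φ t) = (g t)⁻¹ := by
    rw [hφ, Real.exp_neg, Real.exp_log (hgpos t)]
  have hne : g t ≠ 0 := (hgpos t).ne'
  have hpyth := Real.sin_sq_add_cos_sq (κ * t + β)
  have hch := Real.cosh_sq α
  have hkey : Real.sinh α ^ 2 * Real.sin (κ * t + β) ^ 2 + 1 + (g t) ^ 2
      = 2 * Real.cosh α * g t := by
    rw [hg]; nlinarith [hpyth, hch]
  rw [hderiv, hexp1, hexp2]
  field_simp
  linear_combination hkey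
end

section
/- Let α, β, κ ∈ ℝ, let g(t) = sinh(α)·cos(κt+β) + cosh(α), and define φ : ℝ → ℝ by φ(t) = −log(g(t)). Then φ satisfies the second-order differential equation φ″(t) − (1/2)·(φ′(t))² + (1/2)·κ²·e^{2φ(t)} = (1/2)·κ² for all t ∈ ℝ. -/
/-- Let `α, β, κ ∈ ℝ`, let `g t = sinh(α)·cos(κt+β) + cosh(α)` and `φ t = −log (g t)`.
Then `φ″ t − (1/2)·(φ′ t)² + (1/2)·κ²·e^{2φ t} = (1/2)·κ²` for all `t`. -/
theorem stmt10 (α β κ : ℝ)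
    (g : ℝ → ℝ) (hg : ∀ t, g t = Real.sinh α * Real.cos (κ * t + β) + Real.cosh α)
    (φ : ℝ → ℝ) (hφ : ∀ t, φ t = -Real.log (g t)) :
    ∀ t : ℝ,
      deriv (deriv φ) t - (1 / 2) * (deriv φ t) ^ 2 +
        (1 / 2) * κ ^ 2 * Real.exp (2 * φ t) = (1 / 2) * κ ^ 2 := by
  have hg' : g = fun t => Real.sinh α * Real.cos (κ * t + β) + Real.cosh α := funext hg
  subst hg'
  have hφ' : φ = fun t => -Real.log (Real.sinh α * Real.cos (κ * t + β) + Real.cosh α) :=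
    funext hφ
  subst hφ'
  set s := Real.sinh α with hs
  set c := Real.cosh α with hc
  have hcs : c ^ 2 = 1 + s ^ 2 := by rw [hs, hc, Real.cosh_sq]; ring
  have hcpos : 0 < c := Real.cosh_pos α
  have habs : |s| < c := by
    rw [abs_lt]; constructor <;> nlinarith
  have hgpos : ∀ t, 0 < s * Real.cos (κ * t + β) + c := by
    intro t
    have h1 : |s * Real.cos (κ * t + β)| ≤ |s| := by
      rw [abs_mul]
      calc |s| * |Real.cos (κ * t + β)| ≤ |s| * 1 :=
            mul_le_mul_of_nonneg_left (Real.abs_cos_le_one _) (abs_nonneg _)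
        _ = |s| := mul_one _
    have := abs_le.mp h1
    linarith
  -- derivative of the inner linear function
  have hlin : ∀ t : ℝ, HasDerivAt (fun t : ℝ => κ * t + β) κ t := by
    intro t
    simpa using ((hasDerivAt_id t).const_mul κ).add_const β
  -- derivative of g
  have hdg : ∀ t : ℝ, HasDerivAt (fun t => s * Real.cos (κ * t + β) + c)
      (s * (-Real.sin (κ * t + β) * κ)) t := by
    intro t
    exact (((hlin t).cos).const_mul s).add_const c
  -- derivative of φ
  have hdφ : ∀ t : ℝ, HasDerivAt
      (fun t => -Real.log (s * Real.cos (κ * t + β) + c))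
      (s * κ * Real.sin (κ * t + β) / (s * Real.cos (κ * t + β) + c)) t := by
    intro t
    have := ((hdg t).log (ne_of_gt (hgpos t))).neg
    refine this.congr_deriv ?_
    ring
  have hderφ : deriv (fun t => -Real.log (s * Real.cos (κ * t + β) + c)) =
      fun t => s * κ * Real.sin (κ * t + β) / (s * Real.cos (κ * t + β) + c) := by
    funext t; exact (hdφ t).deriv
  intro t
  rw [hderφ]
  -- second derivative
  have hnum : HasDerivAt (fun t => s * κ * Real.sin (κ * t + β))
      (s * κ * (Real.cos (κ * t + β) * κ)) t := ((hlin t).sin).const_mul (s * κ)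
  have hd2 : HasDerivAt
      (fun t => s * κ * Real.sin (κ * t + β) / (s * Real.cos (κ * t + β) + c))
      ((s * κ * (Real.cos (κ * t + β) * κ) * (s * Real.cos (κ * t + β) + c) -
        s * κ * Real.sin (κ * t + β) * (s * (-Real.sin (κ * t + β) * κ))) /
        (s * Real.cos (κ * t + β) + c) ^ 2) t :=
    hnum.div (hdg t) (ne_of_gt (hgpos t))
  rw [hd2.deriv]
  have hgt := hgpos t
  have hexp : Real.exp (2 * -Real.log (s * Real.cos (κ * t + β) + c)) =
      ((s * Real.cos (κ * t + β) + c) ^ 2)⁻¹ := by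
    have h2 : (2:ℝ) * -Real.log (s * Real.cos (κ * t + β) + c) =
        -Real.log ((s * Real.cos (κ * t + β) + c) ^ 2) := by
      rw [Real.log_pow]; push_cast; ring
    rw [h2, Real.exp_neg, Real.exp_log (by positivity)]
  rw [hexp]
  have hsc : Real.sin (κ * t + β) ^ 2 + Real.cos (κ * t + β) ^ 2 = 1 :=
    Real.sin_sq_add_cos_sq _
  have hgt' : (s * Real.cos (κ * t + β) + c) ≠ 0 := ne_of_gt hgt
  have key : (s * κ * (Real.cos (κ * t + β) * κ) * (s * Real.cos (κ * t + β) + c) -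
        s * κ * Real.sin (κ * t + β) * (s * (-Real.sin (κ * t + β) * κ)))
      - (1/2) * (s * κ * Real.sin (κ * t + β)) ^ 2 + (1/2) * κ ^ 2
      = (1/2) * κ ^ 2 * (s * Real.cos (κ * t + β) + c) ^ 2 := by
    linear_combination (κ^2 * s^2 / 2) * hsc - (κ^2 / 2) * hcs
  calc (s * κ * (Real.cos (κ * t + β) * κ) * (s * Real.cos (κ * t + β) + c) -
          s * κ * Real.sin (κ * t + β) * (s * (-Real.sin (κ * t + β) * κ))) /
          (s * Real.cos (κ * t + β) + c) ^ 2
        - 1 / 2 * (s * κ * Real.sin (κ * t + β) / (s * Real.cos (κ * t + β) + c)) ^ 2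
        + 1 / 2 * κ ^ 2 * ((s * Real.cos (κ * t + β) + c) ^ 2)⁻¹
      = ((s * κ * (Real.cos (κ * t + β) * κ) * (s * Real.cos (κ * t + β) + c) -
          s * κ * Real.sin (κ * t + β) * (s * (-Real.sin (κ * t + β) * κ)))
          - (1/2) * (s * κ * Real.sin (κ * t + β)) ^ 2 + (1/2) * κ ^ 2) /
          (s * Real.cos (κ * t + β) + c) ^ 2 := by
        field_simp
    _ = ((1/2) * κ ^ 2 * (s * Real.cos (κ * t + β) + c) ^ 2) /
          (s * Real.cos (κ * t + β) + c) ^ 2 := by rw [key]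
    _ = 1 / 2 * κ ^ 2 := by field_simp
end

section
/- Let κ be a nonzero real number and let φ : ℝ → ℝ be twice differentiable and satisfy φ″(t) − (1/2)·(φ′(t))² + (1/2)·κ²·e^{2φ(t)} = (1/2)·κ² for all t ∈ ℝ. Then there exist real numbers α and β such that e^{−φ(t)} = sinh(α)·cos(κt + β) + cosh(α) for all t ∈ ℝ. -/
/-- Let `κ ≠ 0` and let `φ : ℝ → ℝ` be twice differentiable with
`φ″ − (1/2)·(φ′)² + (1/2)·κ²·e^{2φ} = (1/2)·κ²` everywhere.  Then there exist reals
`α, β` with `e^{−φ t} = sinh(α)·cos(κt + β) + cosh(α)` for all `t`. -/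
theorem stmt12 (κ : ℝ) (hκ : κ ≠ 0) (φ : ℝ → ℝ)
    (hφ : Differentiable ℝ φ) (hφ' : Differentiable ℝ (deriv φ))
    (hode : ∀ t : ℝ,
      deriv (deriv φ) t - (1 / 2) * (deriv φ t) ^ 2 +
        (1 / 2) * κ ^ 2 * Real.exp (2 * φ t) = (1 / 2) * κ ^ 2) :
    ∃ α β : ℝ, ∀ t : ℝ,
      Real.exp (-φ t) = Real.sinh α * Real.cos (κ * t + β) + Real.cosh α := by
  have hκ2 : (0:ℝ) < κ ^ 2 := by positivity
  set p : ℝ → ℝ := deriv φ with hp_def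
  set q : ℝ → ℝ := fun t => (1/2)*(p t)^2 - (1/2)*κ^2*Real.exp (2*φ t) + (1/2)*κ^2
    with hq_def
  have hq : ∀ t, deriv p t = q t := by
    intro t; have := hode t; simp only [hq_def]; linarith
  set ψ : ℝ → ℝ := fun t => Real.exp (-φ t) with hψ_def
  set ψ1 : ℝ → ℝ := fun t => ψ t * (-(p t)) with hψ1_def
  set ψ2 : ℝ → ℝ := fun t => ψ1 t * (-(p t)) + ψ t * (-(q t)) with hψ2_def
  have hψpos : ∀ t, 0 < ψ t := fun t => Real.exp_pos _
  have hDφ : ∀ t, HasDerivAt φ (p t) t := fun t => (hφ t).hasDerivAt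
  have hDp : ∀ t, HasDerivAt p (q t) t := fun t => hq t ▸ (hφ' t).hasDerivAt
  have hDψ : ∀ t, HasDerivAt ψ (ψ1 t) t := by
    intro t
    have h := ((hDφ t).neg).exp
    simpa [hψ_def, hψ1_def] using h
  have hDψ1 : ∀ t, HasDerivAt ψ1 (ψ2 t) t := fun t => (hDψ t).mul ((hDp t).neg)
  -- derivative of q
  set q3 : ℝ → ℝ := fun t => p t * q t - κ^2 * (p t * Real.exp (2*φ t)) with hq3_def
  have hDq : ∀ t, HasDerivAt q (q3 t) t := by
    intro t
    have h := ((((hDp t).pow 2).const_mul ((1:ℝ)/2)).sub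
      ((((hDφ t).const_mul 2).exp).const_mul ((1/2)*κ^2))).add_const ((1/2)*κ^2)
    refine h.congr_deriv ?_
    simp only [hq3_def, hq_def]
    ring
  set ψ3 : ℝ → ℝ := fun t =>
    (ψ2 t * (-(p t)) + ψ1 t * (-(q t))) + (ψ1 t * (-(q t)) + ψ t * (-(q3 t)))
    with hψ3_def
  have hDψ2 : ∀ t, HasDerivAt ψ2 (ψ3 t) t := fun t =>
    ((hDψ1 t).mul ((hDp t).neg)).add ((hDψ t).mul ((hDq t).neg))
  set G : ℝ → ℝ := fun t => ψ2 t + κ^2 * ψ t with hG_def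
  have hDG : ∀ t, HasDerivAt G 0 t := by
    intro t
    have h := (hDψ2 t).add ((hDψ t).const_mul (κ^2))
    refine h.congr_deriv ?_
    simp only [hψ3_def, hψ2_def, hψ1_def, hq3_def, hq_def]
    ring
  have hGconst : ∀ t, G t = G 0 := fun t =>
    is_const_of_deriv_eq_zero (fun x => (hDG x).differentiableAt)
      (fun x => (hDG x).deriv) t 0
  set c0 : ℝ := G 0 / κ^2 with hc0_def
  have hψ2eq : ∀ t, ψ2 t = κ^2 * c0 - κ^2 * ψ t := by
    intro t
    have hCc : κ^2 * c0 = ψ2 0 + κ^2 * ψ 0 := by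
      rw [hc0_def]; simp only [hG_def]; field_simp
    have h := hGconst t
    simp only [hG_def] at h
    linarith
  set A : ℝ := ψ 0 - c0 with hA_def
  set B : ℝ := ψ1 0 / κ with hB_def
  have hψ10 : ψ1 0 = κ * B := by rw [hB_def]; field_simp
  set u : ℝ → ℝ := fun t => ψ t - c0 - A * Real.cos (κ*t) - B * Real.sin (κ*t)
    with hu_def
  set u1 : ℝ → ℝ := fun t => ψ1 t + A * (κ * Real.sin (κ*t)) - B * (κ * Real.cos (κ*t))
    with hu1_def
  set u2 : ℝ → ℝ := fun t => ψ2 t + A * (κ^2 * Real.cos (κ*t)) + B * (κ^2 * Real.sin (κ*t))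
    with hu2_def
  have hlin : ∀ t : ℝ, HasDerivAt (fun t : ℝ => κ*t) κ t := by
    intro t; simpa using (hasDerivAt_id t).const_mul κ
  have hcos : ∀ t : ℝ, HasDerivAt (fun t : ℝ => Real.cos (κ*t)) (-(Real.sin (κ*t)) * κ) t :=
    fun t => (hlin t).cos
  have hsin : ∀ t : ℝ, HasDerivAt (fun t : ℝ => Real.sin (κ*t)) (Real.cos (κ*t) * κ) t :=
    fun t => (hlin t).sin
  have hDu : ∀ t, HasDerivAt u (u1 t) t := by
    intro t
    have h := (((hDψ t).sub_const c0).sub ((hcos t).const_mul A)).sub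
      ((hsin t).const_mul B)
    refine h.congr_deriv ?_
    simp only [hu1_def]; ring
  have hDu1 : ∀ t, HasDerivAt u1 (u2 t) t := by
    intro t
    have h := ((hDψ1 t).add (((hsin t).const_mul κ).const_mul A)).sub
      (((hcos t).const_mul κ).const_mul B)
    refine h.congr_deriv ?_
    simp only [hu2_def]; ring
  have hu2u : ∀ t, u2 t = -(κ^2) * u t := by
    intro t
    simp only [hu2_def, hu_def, hψ2eq t]; ring
  set E : ℝ → ℝ := fun t => (u1 t)^2 + κ^2 * (u t)^2 with hE_def
  have hDE : ∀ t, HasDerivAt E 0 t := by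
    intro t
    have h := (((hDu1 t).pow 2)).add (((hDu t).pow 2).const_mul (κ^2))
    refine h.congr_deriv ?_
    linear_combination (2 * u1 t) * hu2u t
  have hEconst : ∀ t, E t = E 0 := fun t =>
    is_const_of_deriv_eq_zero (fun x => (hDE x).differentiableAt)
      (fun x => (hDE x).deriv) t 0
  have hu0 : u 0 = 0 := by simp [hu_def, hA_def]
  have hu10 : u1 0 = 0 := by
    have : u1 0 = ψ1 0 + A * (κ * Real.sin (κ*0)) - B * (κ * Real.cos (κ*0)) := rfl
    rw [this, hψ10]; simp; ring
  have hE0 : E 0 = 0 := by simp [hE_def, hu0, hu10]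
  have huzero : ∀ t, u t = 0 := by
    intro t
    have h := hEconst t
    rw [hE0] at h
    simp only [hE_def] at h
    have h2 : κ^2 * u t ^ 2 = 0 := by
      nlinarith [sq_nonneg (u1 t), mul_nonneg hκ2.le (sq_nonneg (u t))]
    have h3 : u t ^ 2 = 0 := by
      rcases mul_eq_zero.mp h2 with h4 | h4
      · exact absurd h4 (ne_of_gt hκ2)
      · exact h4
    exact pow_eq_zero_iff two_ne_zero |>.mp h3
  have hψeq : ∀ t, ψ t = c0 + A * Real.cos (κ*t) + B * Real.sin (κ*t) := by
    intro t
    have h := huzero t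
    simp only [hu_def] at h
    linarith
  -- the algebraic constraint at t = 0
  have hes : Real.exp (2*φ 0) * (Real.exp (-φ 0))^2 = 1 := by
    rw [← Real.exp_nat_mul]
    rw [← Real.exp_add]
    norm_num
  have hkey : 2 * ψ 0 * ψ2 0 = (ψ1 0)^2 + κ^2 - κ^2 * (ψ 0)^2 := by
    simp only [hψ2_def, hψ1_def, hq_def, hψ_def]
    linear_combination κ^2 * hes
  have hψ0 : ψ 0 = c0 + A := by simp [hA_def]
  have hψ20 : ψ2 0 = -(κ^2) * A := by
    rw [hψ2eq 0, hψ0]; ring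
  have hc0sq : c0^2 = 1 + A^2 + B^2 := by
    rw [hψ0, hψ20, hψ10] at hkey
    have h : κ^2 * (c0^2 - (1 + A^2 + B^2)) = 0 := by linarith [hkey]; 
    have := mul_eq_zero.mp h
    rcases this with h1 | h2
    · exact absurd h1 (ne_of_gt hκ2)
    · linarith
  have hc0pos : 0 < c0 := by
    have h0 : 0 < c0 + A := hψ0 ▸ hψpos 0
    nlinarith [sq_nonneg B, sq_nonneg (c0 - A), sq_nonneg (c0 + A)]
  set r : ℝ := Real.sqrt (A^2 + B^2) with hr_def
  have hr2 : r^2 = A^2 + B^2 := Real.sq_sqrt (by positivity)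
  set α : ℝ := Real.arsinh r with hα_def
  have hsinh : Real.sinh α = r := Real.sinh_arsinh r
  have hcosh : Real.cosh α = c0 := by
    rw [hα_def, Real.cosh_arsinh, hr2,
      show 1 + (A^2 + B^2) = c0^2 by linarith]
    exact Real.sqrt_sq hc0pos.le
  obtain ⟨β, hcβ, hsβ⟩ : ∃ β : ℝ, r * Real.cos β = A ∧ r * Real.sin β = -B := by
    refine ⟨Complex.arg ⟨A, -B⟩, ?_, ?_⟩
    · have h := Complex.norm_mul_cos_arg ⟨A, -B⟩
      have habs : ‖(⟨A, -B⟩ : ℂ)‖ = r := by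
        rw [Complex.norm_def, Complex.normSq_mk]
        rw [show A*A + -B * -B = A^2 + B^2 by ring]
      rw [habs] at h
      exact h
    · have h := Complex.norm_mul_sin_arg ⟨A, -B⟩
      have habs : ‖(⟨A, -B⟩ : ℂ)‖ = r := by
        rw [Complex.norm_def, Complex.normSq_mk]
        rw [show A*A + -B * -B = A^2 + B^2 by ring]
      rw [habs] at h
      exact h
  refine ⟨α, β, fun t => ?_⟩
  have hψt := hψeq t
  rw [Real.cos_add, hsinh, hcosh]
  show ψ t = r * (Real.cos (κ*t) * Real.cos β - Real.sin (κ*t) * Real.sin β) + c0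
  rw [hψt]
  linear_combination (-Real.cos (κ*t)) * hcβ + Real.sin (κ*t) * hsβ
end
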